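/- The ℓ¹-covering radius of the lattice 𝓗₂ ⊕ 𝓗₂ ⊂ ℝ⁴ equals 1, where 𝓗₂ ⊂ ℝ² is the lattice generated by (1,0) and (1/2,1/2). -/
import Mathlib

def l1 {n : ℕ} (x : Fin n → ℝ) : ℝ := ∑ i, |x i|

/-- The lattice `𝓗₂ ⊕ 𝓗₂ ⊂ ℝ⁴`, where `𝓗₂` is generated by `(1,0)` and `(1/2,1/2)`. -/
def H2H2 : Set (Fin 4 → ℝ) :=
  {x | ∃ a b c d : ℤ, x = ![(a : ℝ) + (b : ℝ)/2, (b : ℝ)/2, (c : ℝ) + (d : ℝ)/2, (d : ℝ)/2]}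

lemma half_le_abs (n : ℤ) : (1:ℝ)/2 ≤ |1/2 - (n:ℝ)| := by
  rcases le_or_gt n 0 with h | h
  · have hn : (n:ℝ) ≤ 0 := by exact_mod_cast h
    rw [abs_of_nonneg (by linarith)]; linarith
  · have hn : (1:ℝ) ≤ n := by exact_mod_cast h
    rw [abs_of_nonpos (by linarith)]; linarith

lemma abs_add_abs_le_max (p q : ℝ) : |p| + |q| ≤ max |p+q| |p-q| := by
  rcases le_total 0 p with hp | hp <;> rcases le_total 0 q with hq | hq
  · refine le_trans ?_ (le_max_left _ _)
    rw [abs_of_nonneg hp, abs_of_nonneg hq]; exact le_abs_self _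
  · refine le_trans ?_ (le_max_right _ _)
    rw [abs_of_nonneg hp, abs_of_nonpos hq]
    have := le_abs_self (p - q); linarith
  · refine le_trans ?_ (le_max_right _ _)
    rw [abs_of_nonpos hp, abs_of_nonneg hq]
    have := neg_abs_le (p - q); linarith
  · refine le_trans ?_ (le_max_left _ _)
    rw [abs_of_nonpos hp, abs_of_nonpos hq]
    have := neg_abs_le (p + q); linarith

lemma exists_close (y0 y1 : ℝ) :
    ∃ a b : ℤ, |y0 - ((a:ℝ) + (b:ℝ)/2)| + |y1 - (b:ℝ)/2| ≤ 1/2 := by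
  refine ⟨round (y0 - y1), round (y0 + y1) - round (y0 - y1), ?_⟩
  set a : ℤ := round (y0 - y1)
  set m : ℤ := round (y0 + y1)
  have h1 : |(y0 + y1) - (m:ℝ)| ≤ 1/2 := abs_sub_round _
  have h2 : |(y0 - y1) - (a:ℝ)| ≤ 1/2 := abs_sub_round _
  have key := abs_add_abs_le_max (y0 - ((a:ℝ) + ((m - a : ℤ):ℝ)/2)) (y1 - ((m - a : ℤ):ℝ)/2)
  push_cast at key ⊢
  have e1 : (y0 - ((a:ℝ) + ((m:ℝ) - a)/2)) + (y1 - ((m:ℝ) - a)/2) = (y0 + y1) - m := by ring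
  have e2 : (y0 - ((a:ℝ) + ((m:ℝ) - a)/2)) - (y1 - ((m:ℝ) - a)/2) = (y0 - y1) - a := by ring
  rw [e1, e2] at key
  calc _ ≤ max |(y0 + y1) - (m:ℝ)| |(y0 - y1) - (a:ℝ)| := key
    _ ≤ 1/2 := max_le h1 h2

lemma zero_mem : (0 : Fin 4 → ℝ) ∈ H2H2 := by
  refine ⟨0, 0, 0, 0, ?_⟩
  ext i; fin_cases i <;> simp

lemma bddBelow_aux (y : Fin 4 → ℝ) : BddBelow ((fun v => l1 (y - v)) '' H2H2) := by
  refine ⟨0, ?_⟩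
  rintro z ⟨v, _, rfl⟩
  exact Finset.sum_nonneg fun i _ => abs_nonneg _

lemma upper (y : Fin 4 → ℝ) : sInf ((fun v => l1 (y - v)) '' H2H2) ≤ 1 := by
  obtain ⟨a, b, h1⟩ := exists_close (y 0) (y 1)
  obtain ⟨c, d, h2⟩ := exists_close (y 2) (y 3)
  set v : Fin 4 → ℝ := ![(a : ℝ) + (b : ℝ)/2, (b : ℝ)/2, (c : ℝ) + (d : ℝ)/2, (d : ℝ)/2]
  have hv : v ∈ H2H2 := ⟨a, b, c, d, rfl⟩
  have hval : l1 (y - v) ≤ 1 := by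
    simp only [l1, Fin.sum_univ_four, Pi.sub_apply, v, Matrix.cons_val_zero,
      Matrix.cons_val_one, Matrix.head_cons, Matrix.cons_val_two, Matrix.tail_cons,
      Matrix.cons_val_three]
    linarith
  exact le_trans (csInf_le (bddBelow_aux y) ⟨v, hv, rfl⟩) hval

lemma attained : sInf ((fun v => l1 ((![1/2, 0, 1/2, 0] : Fin 4 → ℝ) - v)) '' H2H2) = 1 := by
  apply le_antisymm
  · refine le_trans (csInf_le (bddBelow_aux _) ⟨0, zero_mem, rfl⟩) ?_
    simp [l1, Fin.sum_univ_four]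
    have : |(1:ℝ)/2| = 1/2 := abs_of_nonneg (by norm_num)
    linarith
  · refine le_csInf ⟨_, Set.mem_image_of_mem _ zero_mem⟩ ?_
    rintro z ⟨v, ⟨a, b, c, d, rfl⟩, rfl⟩
    simp only [l1, Fin.sum_univ_four, Pi.sub_apply, Matrix.cons_val_zero,
      Matrix.cons_val_one, Matrix.head_cons, Matrix.cons_val_two, Matrix.tail_cons,
      Matrix.cons_val_three]
    have k1 : (1:ℝ)/2 ≤ |1/2 - ((a:ℝ) + (b:ℝ)/2)| + |0 - (b:ℝ)/2| := by
      have := le_abs_self ((1/2 - ((a:ℝ) + (b:ℝ)/2)) + (0 - (b:ℝ)/2))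
      have h := half_le_abs (a + b)
      push_cast at h
      have habs : |(1/2 - ((a:ℝ) + (b:ℝ)/2)) + (0 - (b:ℝ)/2)| = |1/2 - ((a:ℝ) + b)| := by
        ring_nf
      calc (1:ℝ)/2 ≤ |1/2 - ((a:ℝ) + b)| := h
        _ = |(1/2 - ((a:ℝ) + (b:ℝ)/2)) + (0 - (b:ℝ)/2)| := habs.symm
        _ ≤ _ := abs_add_le _ _
    have k2 : (1:ℝ)/2 ≤ |1/2 - ((c:ℝ) + (d:ℝ)/2)| + |0 - (d:ℝ)/2| := by
      have h := half_le_abs (c + d)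
      push_cast at h
      have habs : |(1/2 - ((c:ℝ) + (d:ℝ)/2)) + (0 - (d:ℝ)/2)| = |1/2 - ((c:ℝ) + d)| := by
        ring_nf
      calc (1:ℝ)/2 ≤ |1/2 - ((c:ℝ) + d)| := h
        _ = |(1/2 - ((c:ℝ) + (d:ℝ)/2)) + (0 - (d:ℝ)/2)| := habs.symm
        _ ≤ _ := abs_add_le _ _
    linarith

theorem stmt10 :
    sSup (Set.range fun y : Fin 4 → ℝ => sInf ((fun v => l1 (y - v)) '' H2H2)) = 1 := by
  apply le_antisymm
  · apply csSup_le (Set.range_nonempty _)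
    rintro z ⟨y, rfl⟩
    exact upper y
  · have hb : BddAbove (Set.range fun y : Fin 4 → ℝ =>
        sInf ((fun v => l1 (y - v)) '' H2H2)) := by
      refine ⟨1, ?_⟩
      rintro z ⟨y, rfl⟩
      exact upper y
    exact le_csSup hb ⟨(![1/2, 0, 1/2, 0] : Fin 4 → ℝ), attained⟩
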